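/- Let W : SL(2) → ℝ be objective and isotropic, let φ : [0,∞) → ℝ be the unique function with W(F) = φ(λmax(F) − 1/λmax(F)) for all F ∈ SL(2), and let φ̃ : ℝ → ℝ, φ̃(γ) = W(K(γ)), where K(γ) is the matrix with rows (1, γ) and (0, 1). Then φ̃(γ) = φ(γ) for all γ ≥ 0 and φ̃(−γ) = φ̃(γ) for all γ ∈ ℝ; moreover, if φ̃ is convex on ℝ, then φ is nondecreasing and convex on [0,∞). -/
import Mathlib


open Matrix

/-- The largest singular value of a real 2×2 matrix `F`, i.e. the square root of
the largest eigenvalue of `FᵀF`. -/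
noncomputable def lambdaMax (F : Matrix (Fin 2) (Fin 2) ℝ) : ℝ :=
  Real.sqrt (((Fᵀ * F).trace + Real.sqrt ((Fᵀ * F).trace ^ 2 - 4 * (Fᵀ * F).det)) / 2)

lemma shear_det (γ : ℝ) : (!![1, γ; 0, 1] : Matrix (Fin 2) (Fin 2) ℝ).det = 1 := by
  simp [Matrix.det_fin_two_of]

lemma shear_prod (γ : ℝ) :
    (!![1, γ; 0, 1] : Matrix (Fin 2) (Fin 2) ℝ)ᵀ * !![1, γ; 0, 1] = !![1, γ; γ, γ^2 + 1] := by
  have ht : (!![1, γ; 0, 1] : Matrix (Fin 2) (Fin 2) ℝ)ᵀ = !![1, 0; γ, 1] :=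
    (Matrix.transposeᵣ_eq _).symm
  rw [ht]
  ext i j
  fin_cases i <;> fin_cases j <;> simp [Matrix.mul_apply, Fin.sum_univ_two] <;> ring

lemma shear_lambdaMax (γ : ℝ) :
    lambdaMax !![1, γ; 0, 1] = (|γ| + Real.sqrt (γ^2 + 4)) / 2 := by
  have h4 : (0:ℝ) ≤ γ^2 + 4 := by positivity
  have hs2 : Real.sqrt (γ^2+4) ^ 2 = γ^2 + 4 := Real.sq_sqrt h4
  have hsnn : 0 ≤ Real.sqrt (γ^2+4) := Real.sqrt_nonneg _
  unfold lambdaMax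
  rw [shear_prod]
  have htr : (!![1, γ; γ, γ^2 + 1] : Matrix (Fin 2) (Fin 2) ℝ).trace = γ^2 + 2 := by
    simp [Matrix.trace_fin_two_of]; ring
  have hdet : (!![1, γ; γ, γ^2 + 1] : Matrix (Fin 2) (Fin 2) ℝ).det = 1 := by
    simp [Matrix.det_fin_two_of]; ring
  rw [htr, hdet]
  have hd : (γ^2+2)^2 - 4*1 = (|γ| * Real.sqrt (γ^2+4))^2 := by
    rw [mul_pow, hs2, sq_abs]; ring
  rw [hd, Real.sqrt_sq (by positivity)]
  have : (γ^2 + 2 + |γ| * Real.sqrt (γ^2+4)) / 2 = ((|γ| + Real.sqrt (γ^2+4)) / 2)^2 := by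
    field_simp
    nlinarith [hs2, sq_abs γ]
  rw [this, Real.sqrt_sq (by positivity)]

lemma shear_gap (γ : ℝ) :
    lambdaMax !![1, γ; 0, 1] - 1 / lambdaMax !![1, γ; 0, 1] = |γ| := by
  rw [shear_lambdaMax]
  have h4 : (0:ℝ) ≤ γ^2 + 4 := by positivity
  have hs2 : Real.sqrt (γ^2+4) ^ 2 = γ^2 + 4 := Real.sq_sqrt h4
  have hs2' : (2:ℝ) ≤ Real.sqrt (γ^2+4) := by
    nlinarith [Real.sqrt_nonneg (γ^2+4)]
  have hpos : 0 < (|γ| + Real.sqrt (γ^2+4)) / 2 := by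
    have := abs_nonneg γ; linarith
  field_simp
  nlinarith [hs2, sq_abs γ, abs_nonneg γ]

/-- For `W : SL(2) → ℝ` objective and isotropic, with
`φ` the representing function `W(F) = φ(λmax(F) − 1/λmax(F))` and
`φ̃(γ) = W(K(γ))` (`K(γ)` the simple shear with rows `(1, γ)`, `(0, 1)`):
`φ̃ = φ` on `[0,∞)`, `φ̃` is even, and if `φ̃` is convex on `ℝ`, then `φ` is
nondecreasing and convex on `[0,∞)`. -/
theorem shear_representation_even_and_convexity
    (W : Matrix (Fin 2) (Fin 2) ℝ → ℝ)
    (hW : ∀ F : Matrix (Fin 2) (Fin 2) ℝ, F.det = 1 →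
      ∀ Q₁ Q₂ : Matrix (Fin 2) (Fin 2) ℝ, Q₁ᵀ * Q₁ = 1 → Q₂ᵀ * Q₂ = 1 →
        W (Q₁ * F * Q₂) = W F)
    (φ : ℝ → ℝ)
    (hφ : ∀ F : Matrix (Fin 2) (Fin 2) ℝ, F.det = 1 →
      W F = φ (lambdaMax F - 1 / lambdaMax F)) :
    (∀ γ : ℝ, 0 ≤ γ → W !![1, γ; 0, 1] = φ γ) ∧
    (∀ γ : ℝ, W !![1, -γ; 0, 1] = W !![1, γ; 0, 1]) ∧
    (ConvexOn ℝ Set.univ (fun γ : ℝ => W !![1, γ; 0, 1]) →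
      MonotoneOn φ (Set.Ici 0) ∧ ConvexOn ℝ (Set.Ici 0) φ) := by
  have key : ∀ γ : ℝ, W !![1, γ; 0, 1] = φ |γ| := fun γ => by
    rw [hφ _ (shear_det γ), shear_gap]
  have h1 : ∀ γ : ℝ, 0 ≤ γ → W !![1, γ; 0, 1] = φ γ := fun γ hγ => by
    rw [key, abs_of_nonneg hγ]
  have h2 : ∀ γ : ℝ, W !![1, -γ; 0, 1] = W !![1, γ; 0, 1] := fun γ => by
    rw [key, key γ, abs_neg]
  refine ⟨h1, h2, fun hconv => ⟨?_, ?_⟩⟩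
  · intro x hx y hy hxy
    simp only [Set.mem_Ici] at hx hy
    rw [← h1 x hx, ← h1 y hy]
    have hseg : x ∈ segment ℝ (-y) y := by
      rw [segment_eq_Icc (by linarith)]
      exact ⟨by linarith, hxy⟩
    have := hconv.le_on_segment (Set.mem_univ (-y)) (Set.mem_univ y) hseg
    simpa [h2 y] using this
  · refine ⟨convex_Ici 0, fun x hx y hy a b ha hb hab => ?_⟩
    simp only [Set.mem_Ici] at hx hy
    have hc : 0 ≤ a • x + b • y := by positivity
    rw [← h1 x hx, ← h1 y hy, ← h1 _ hc]
    exact hconv.2 (Set.mem_univ x) (Set.mem_univ y) ha hb hab
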